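/- Let G be a group and H ≤ G, and let I be the augmentation ideal of ℤ[G/H]. Define α: ℤ[G/H] ⊗_ℤ I → ℤ[G] ⊗_{ℤ[H]} I by α(gH ⊗ y) = g ⊗ g⁻¹y and β: ℤ[G] ⊗_{ℤ[H]} I → ℤ[G/H] ⊗_ℤ I by β(g ⊗ y) = gH ⊗ gy, where ℤ[G/H] ⊗_ℤ I carries the diagonal G-action and ℤ[G] ⊗_{ℤ[H]} I carries the G-action on the left factor. Then α and β are well-defined mutually inverse G-module isomorphisms. -/

import Mathlib

open Finsupp TensorProduct

variable (G : Type*) [Group G] (H : Subgroup G)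

/-- The augmentation `ℤ[G/H] → ℤ`. -/
noncomputable def epsGH : ((G ⧸ H) →₀ ℤ) →ₗ[ℤ] ℤ :=
  Finsupp.linearCombination ℤ fun _ => (1 : ℤ)

/-- The augmentation ideal `I = ker(ε : ℤ[G/H] → ℤ)`. -/
noncomputable def Iaug : Submodule ℤ ((G ⧸ H) →₀ ℤ) := LinearMap.ker (epsGH G H)

theorem mapDomain_mem_Iaug (g : G) {x : (G ⧸ H) →₀ ℤ} (hx : x ∈ Iaug G H) :
    Finsupp.lmapDomain ℤ ℤ (fun s : G ⧸ H => g • s) x ∈ Iaug G H := by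
  simpa [Iaug, epsGH, LinearMap.mem_ker, Finsupp.linearCombination_mapDomain,
    Function.comp_def] using hx

/-- The action of `g ∈ G` on the augmentation ideal `I ⊆ ℤ[G/H]`. -/
noncomputable def rhoI (g : G) : Iaug G H →ₗ[ℤ] Iaug G H :=
  (Finsupp.lmapDomain ℤ ℤ (fun s : G ⧸ H => g • s)).restrict
    (fun _ hx => mapDomain_mem_Iaug G H g hx)

/-- The submodule of `ℤ[G] ⊗_ℤ I` of relations `gh ⊗ y − g ⊗ h·y` defining the balanced
tensor product `ℤ[G] ⊗_{ℤ[H]} I`. -/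
noncomputable def relSub : Submodule ℤ ((G →₀ ℤ) ⊗[ℤ] (Iaug G H)) :=
  Submodule.span ℤ {z | ∃ (g : G) (h : H) (y : Iaug G H),
    z = Finsupp.single (g * (h : G)) (1 : ℤ) ⊗ₜ y -
      Finsupp.single g (1 : ℤ) ⊗ₜ (rhoI G H (h : G) y)}

/-- The balanced tensor product `ℤ[G] ⊗_{ℤ[H]} I` (the induced module `Ind_H^G I`). -/
noncomputable def IndI := ((G →₀ ℤ) ⊗[ℤ] (Iaug G H)) ⧸ relSub G H

noncomputable instance : AddCommGroup (IndI G H) := by unfold IndI; infer_instance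
noncomputable instance : Module ℤ (IndI G H) := by unfold IndI; infer_instance



lemma rhoI_mul (a b : G) : rhoI G H (a * b) = (rhoI G H a).comp (rhoI G H b) := by
  refine LinearMap.ext fun y => Subtype.ext ?_
  show Finsupp.mapDomain _ (y : (G ⧸ H) →₀ ℤ) = Finsupp.mapDomain _ (Finsupp.mapDomain _ _)
  rw [← Finsupp.mapDomain_comp]
  congr 1
  funext s
  simp [Function.comp, mul_smul]

lemma rhoI_one : rhoI G H 1 = LinearMap.id := by
  refine LinearMap.ext fun y => Subtype.ext ?_
  show Finsupp.mapDomain (fun s : G ⧸ H => (1 : G) • s) (y : (G ⧸ H) →₀ ℤ) = (y : (G ⧸ H) →₀ ℤ)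
  have h1 : (fun s : G ⧸ H => (1 : G) • s) = id := funext fun s => one_smul G s
  rw [h1, Finsupp.mapDomain_id]

lemma rhoI_inv_rhoI (g : G) (y : Iaug G H) : rhoI G H g⁻¹ (rhoI G H g y) = y := by
  have := congrArg (fun f => f y) (rhoI_mul G H g⁻¹ g)
  simp only [inv_mul_cancel, rhoI_one] at this
  simpa using this.symm

lemma rhoI_rhoI_inv (g : G) (y : Iaug G H) : rhoI G H g (rhoI G H g⁻¹ y) = y := by
  simpa using rhoI_inv_rhoI G H g⁻¹ y

noncomputable def mkI : ((G →₀ ℤ) ⊗[ℤ] Iaug G H) →ₗ[ℤ] IndI G H := (relSub G H).mkQ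

lemma rel_mk (g : G) (h : H) (y : Iaug G H) :
    mkI G H (Finsupp.single (g * (h : G)) (1 : ℤ) ⊗ₜ y) =
    mkI G H (Finsupp.single g (1 : ℤ) ⊗ₜ (rhoI G H (h : G) y)) := by
  show (Submodule.Quotient.mk _ : IndI G H) = Submodule.Quotient.mk _
  rw [Submodule.Quotient.eq]
  exact Submodule.subset_span ⟨g, h, y, rfl⟩

/-- `y ↦ [g ⊗ g⁻¹ y]`. -/
noncomputable def fAux (g : G) : Iaug G H →ₗ[ℤ] IndI G H :=
  (mkI G H).comp
    ((TensorProduct.mk ℤ (G →₀ ℤ) (Iaug G H) (Finsupp.single g 1)).comp (rhoI G H g⁻¹))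

lemma fAux_coset_eq (a b : G) (hab : a⁻¹ * b ∈ H) : fAux G H a = fAux G H b := by
  ext y
  have hb : b = a * ((⟨a⁻¹ * b, hab⟩ : H) : G) := by group
  show mkI G H (Finsupp.single a (1 : ℤ) ⊗ₜ rhoI G H a⁻¹ y) =
    mkI G H (Finsupp.single b (1 : ℤ) ⊗ₜ rhoI G H b⁻¹ y)
  conv_rhs => rw [hb, rel_mk]
  have hr : rhoI G H ((⟨a⁻¹ * b, hab⟩ : H) : G) (rhoI G H (a * ((⟨a⁻¹ * b, hab⟩ : H) : G))⁻¹ y)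
      = rhoI G H a⁻¹ y := by
    rw [← LinearMap.comp_apply, ← rhoI_mul]
    have : (((⟨a⁻¹ * b, hab⟩ : H) : G)) * (a * ((⟨a⁻¹ * b, hab⟩ : H) : G))⁻¹ = a⁻¹ := by group
    rw [this]
  exact congrArg (fun z => mkI G H ((Finsupp.single a (1 : ℤ)) ⊗ₜ z)) hr.symm

noncomputable def fBar (s : G ⧸ H) : Iaug G H →ₗ[ℤ] IndI G H :=
  Quotient.liftOn' s (fAux G H) (fun a b hab =>
    fAux_coset_eq G H a b ((QuotientGroup.leftRel_apply).mp hab))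

lemma fBar_mk (g : G) : fBar G H (g : G ⧸ H) = fAux G H g := rfl

noncomputable def alphaLin : (((G ⧸ H) →₀ ℤ) ⊗[ℤ] (Iaug G H)) →ₗ[ℤ] IndI G H :=
  TensorProduct.lift ((Finsupp.lift (Iaug G H →ₗ[ℤ] IndI G H) ℤ (G ⧸ H)) (fBar G H))

lemma alphaLin_single (g : G) (y : Iaug G H) :
    alphaLin G H (Finsupp.single ((g : G ⧸ H)) (1 : ℤ) ⊗ₜ y) =
    Submodule.Quotient.mk (Finsupp.single g (1 : ℤ) ⊗ₜ (rhoI G H g⁻¹ y)) := by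
  erw [alphaLin, TensorProduct.lift.tmul]
  erw [Finsupp.lift_apply, Finsupp.sum_single_index (by simp), one_smul]
  rfl

noncomputable def bAux (g : G) : Iaug G H →ₗ[ℤ] (((G ⧸ H) →₀ ℤ) ⊗[ℤ] (Iaug G H)) :=
  (TensorProduct.mk ℤ ((G ⧸ H) →₀ ℤ) (Iaug G H)
    (Finsupp.single ((g : G ⧸ H)) 1)).comp (rhoI G H g)

noncomputable def betaLin0 : ((G →₀ ℤ) ⊗[ℤ] (Iaug G H)) →ₗ[ℤ]
    (((G ⧸ H) →₀ ℤ) ⊗[ℤ] (Iaug G H)) :=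
  TensorProduct.lift ((Finsupp.lift _ ℤ G) (bAux G H))

lemma betaLin0_single (g : G) (y : Iaug G H) :
    betaLin0 G H (Finsupp.single g (1 : ℤ) ⊗ₜ y) =
    Finsupp.single ((g : G ⧸ H)) (1 : ℤ) ⊗ₜ (rhoI G H g y) := by
  erw [betaLin0, TensorProduct.lift.tmul]
  simp [bAux]
  erw [Finsupp.sum_single_index (by erw [zero_smul]; rfl), one_smul]
  rfl

lemma betaLin0_rel : relSub G H ≤ LinearMap.ker (betaLin0 G H) := by
  rw [relSub, Submodule.span_le]
  rintro z ⟨g, h, y, rfl⟩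
  have hc : ((g * (h : G) : G) : G ⧸ H) = (g : G ⧸ H) := by
    apply QuotientGroup.eq.mpr; simpa using h.2
  simp only [SetLike.mem_coe, LinearMap.mem_ker, map_sub, betaLin0_single, hc, rhoI_mul,
    LinearMap.comp_apply, sub_self]

noncomputable def betaLin : IndI G H →ₗ[ℤ] (((G ⧸ H) →₀ ℤ) ⊗[ℤ] (Iaug G H)) :=
  (relSub G H).liftQ (betaLin0 G H) (betaLin0_rel G H)

lemma betaLin_mk (g : G) (y : Iaug G H) :
    betaLin G H (Submodule.Quotient.mk (Finsupp.single g (1 : ℤ) ⊗ₜ y)) =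
    Finsupp.single ((g : G ⧸ H)) (1 : ℤ) ⊗ₜ (rhoI G H g y) := by
  have h0 : betaLin G H (Submodule.Quotient.mk (Finsupp.single g (1 : ℤ) ⊗ₜ y)) =
      betaLin0 G H (Finsupp.single g (1 : ℤ) ⊗ₜ y) := rfl
  rw [h0, betaLin0_single]

lemma beta_alpha : (betaLin G H).comp (alphaLin G H) = LinearMap.id := by
  apply TensorProduct.ext
  apply Finsupp.lhom_ext'
  intro s
  induction s using Quotient.inductionOn' with
  | h g =>
    ext y
    show betaLin G H (alphaLin G H (Finsupp.single ((g : G ⧸ H)) 1 ⊗ₜ y)) = _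
    rw [alphaLin_single, betaLin_mk, rhoI_rhoI_inv]
    rfl

lemma alpha_beta : (alphaLin G H).comp (betaLin G H) = LinearMap.id := by
  apply (relSub G H).linearMap_qext
  apply TensorProduct.ext
  apply Finsupp.lhom_ext'
  intro g
  ext y
  show alphaLin G H (betaLin G H (Submodule.Quotient.mk (Finsupp.single g 1 ⊗ₜ y))) = _
  rw [betaLin_mk, alphaLin_single, rhoI_inv_rhoI]
  rfl

lemma Lmap_rel (g : G) : relSub G H ≤ (relSub G H).comap
    (TensorProduct.map (Finsupp.lmapDomain ℤ ℤ (fun x : G => g * x)) LinearMap.id) := by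
  rw [relSub]
  erw [Submodule.span_le]
  rintro z ⟨g', h, y, rfl⟩
  show TensorProduct.map (Finsupp.lmapDomain ℤ ℤ (fun x : G => g * x)) LinearMap.id
    (Finsupp.single (g' * (h : G)) (1 : ℤ) ⊗ₜ y -
      Finsupp.single g' (1 : ℤ) ⊗ₜ (rhoI G H (h : G) y)) ∈ relSub G H
  simp only [SetLike.mem_coe, Submodule.mem_comap, map_sub, TensorProduct.map_tmul,
    Finsupp.lmapDomain_apply, Finsupp.mapDomain_single, LinearMap.id_apply]
  rw [← mul_assoc]
  exact Submodule.subset_span ⟨g * g', h, y, rfl⟩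

noncomputable def Lmap (g : G) : IndI G H →ₗ[ℤ] IndI G H :=
  (relSub G H).mapQ (relSub G H)
    (TensorProduct.map (Finsupp.lmapDomain ℤ ℤ (fun x : G => g * x)) LinearMap.id)
    (Lmap_rel G H g)

lemma Lmap_mk (g g' : G) (y : Iaug G H) :
    Lmap G H g (Submodule.Quotient.mk (Finsupp.single g' (1 : ℤ) ⊗ₜ y)) =
    Submodule.Quotient.mk (Finsupp.single (g * g') (1 : ℤ) ⊗ₜ y) := by
  have h0 : Lmap G H g (Submodule.Quotient.mk (Finsupp.single g' (1 : ℤ) ⊗ₜ y)) =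
      Submodule.Quotient.mk
        (TensorProduct.map (Finsupp.lmapDomain ℤ ℤ (fun x : G => g * x)) LinearMap.id
          (Finsupp.single g' (1 : ℤ) ⊗ₜ y)) := rfl
  rw [h0]
  simp
  rfl

/-- `α : ℤ[G/H] ⊗_ℤ I → ℤ[G] ⊗_{ℤ[H]} I`, `gH ⊗ y ↦ g ⊗ g⁻¹y`, and
`β : g ⊗ y ↦ gH ⊗ gy` are well-defined, mutually inverse `G`-module isomorphisms, where
`ℤ[G/H] ⊗_ℤ I` carries the diagonal action and `ℤ[G] ⊗_{ℤ[H]} I` the action on the left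
factor. -/
theorem tensor_iso_induced_module :
    ∃ (α : (((G ⧸ H) →₀ ℤ) ⊗[ℤ] (Iaug G H)) ≃ₗ[ℤ] IndI G H)
      (L : G → IndI G H →ₗ[ℤ] IndI G H),
      (∀ (g g' : G) (y : Iaug G H),
        L g (Submodule.Quotient.mk (Finsupp.single g' (1 : ℤ) ⊗ₜ y)) =
          Submodule.Quotient.mk (Finsupp.single (g * g') (1 : ℤ) ⊗ₜ y)) ∧
      (∀ (g : G) (y : Iaug G H),
        α (Finsupp.single ((g : G ⧸ H)) (1 : ℤ) ⊗ₜ y) =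
          Submodule.Quotient.mk (Finsupp.single g (1 : ℤ) ⊗ₜ (rhoI G H g⁻¹ y))) ∧
      (∀ (g : G) (x : ((G ⧸ H) →₀ ℤ) ⊗[ℤ] (Iaug G H)),
        α (TensorProduct.map (Finsupp.lmapDomain ℤ ℤ (fun s : G ⧸ H => g • s))
            (rhoI G H g) x) = L g (α x)) ∧
      (∀ (g : G) (y : Iaug G H),
        α.symm (Submodule.Quotient.mk (Finsupp.single g (1 : ℤ) ⊗ₜ y)) =
          Finsupp.single ((g : G ⧸ H)) (1 : ℤ) ⊗ₜ (rhoI G H g y)) := by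
  refine ⟨LinearEquiv.ofLinear (alphaLin G H) (betaLin G H) (alpha_beta G H) (beta_alpha G H),
    Lmap G H, Lmap_mk G H, alphaLin_single G H, ?_, ?_⟩
  · intro g x
    have key : ((alphaLin G H).comp
        (TensorProduct.map (Finsupp.lmapDomain ℤ ℤ (fun s : G ⧸ H => g • s)) (rhoI G H g))) =
        (Lmap G H g).comp (alphaLin G H) := by
      apply TensorProduct.ext
      apply Finsupp.lhom_ext'
      intro s
      induction s using Quotient.inductionOn' with
      | h g' =>
        ext y
        show alphaLin G H (TensorProduct.map _ _ (Finsupp.single ((g' : G ⧸ H)) 1 ⊗ₜ y)) =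
          Lmap G H g (alphaLin G H (Finsupp.single ((g' : G ⧸ H)) 1 ⊗ₜ y))
        rw [alphaLin_single, Lmap_mk, TensorProduct.map_tmul]
        have hdom : Finsupp.lmapDomain ℤ ℤ (fun s : G ⧸ H => g • s)
            (Finsupp.single ((g' : G ⧸ H)) (1 : ℤ)) =
            Finsupp.single (((g * g' : G) : G ⧸ H)) (1 : ℤ) := by
          simp only [Finsupp.lmapDomain_apply, Finsupp.mapDomain_single]
          rfl
        rw [hdom, alphaLin_single]
        have hr : rhoI G H (g * g')⁻¹ (rhoI G H g y) = rhoI G H g'⁻¹ y := by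
          rw [← LinearMap.comp_apply, ← rhoI_mul]
          have : (g * g')⁻¹ * g = g'⁻¹ := by group
          rw [this]
        rw [hr]
    exact congrArg (fun f => f x) (congrArg DFunLike.coe key)
  · intro g y
    show betaLin G H _ = _
    exact betaLin_mk G H g y
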